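/- Let S be a numerical semigroup with minimal generating set P, conductor c, left part L = S ∩ [0,c), depth q = ⌈c/m⌉, offset ρ = qm−c, and D_q = D ∩ [c,c+m) where D is the set of decomposable elements. Then W(S) := |P||L| − c satisfies W(S) ≥ W_0(S) := |P ∩ L|·|L| − q·|D_q| + ρ. -/

import Mathlib

theorem stmt14 (S : Set ℕ)
    (h0 : 0 ∈ S)
    (hadd : ∀ a ∈ S, ∀ b ∈ S, a + b ∈ S)
    (hfin : (Sᶜ : Set ℕ).Finite)
    (m : ℕ) (hm : m ∈ S ∧ m ≠ 0 ∧ ∀ x ∈ S, x ≠ 0 → m ≤ x)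
    (c : ℕ) (hc : (∀ x, c ≤ x → x ∈ S) ∧ ∀ c', (∀ x, c' ≤ x → x ∈ S) → c ≤ c')
    (q ρ : ℕ) (hq : q = (c + m - 1) / m) (hρ : ρ = q * m - c)
    (P : Set ℕ)
    (hP : P = {x ∈ S | x ≠ 0 ∧ ¬ ∃ a ∈ S, ∃ b ∈ S, a ≠ 0 ∧ b ≠ 0 ∧ a + b = x})
    (D : Set ℕ)
    (hD : D = {x ∈ S | ∃ a ∈ S, ∃ b ∈ S, a ≠ 0 ∧ b ≠ 0 ∧ a + b = x})
    (L : Set ℕ) (hL : L = {x ∈ S | x < c})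
    (Dq : Set ℕ) (hDq : Dq = {x ∈ D | c ≤ x ∧ x < c + m}) :
    (P.ncard : ℤ) * L.ncard - c ≥
      (P ∩ L).ncard * L.ncard - q * Dq.ncard + ρ := by
  obtain ⟨hmS, hm0, hmmin⟩ := hm
  -- dispose of the trivial case c = 0
  rcases Nat.eq_zero_or_pos c with hc0 | hcpos
  · subst hc0
    have hq0 : q = 0 := by
      rw [hq]
      exact Nat.div_eq_of_lt (by omega)
    have hρ0 : ρ = 0 := by rw [hρ, hq0]; simp
    have hLe : L = ∅ := by
      rw [hL]; ext x; simp
    rw [hLe, hq0, hρ0]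
    simp
  -- c ≥ 1 from now on
  have hI : Set.Ico c (c + m) = ↑(Finset.Ico c (c + m)) := by simp
  have hIfin : (Set.Ico c (c + m)).Finite := hI ▸ (Finset.Ico c (c + m)).finite_toSet
  have hIcard : (Set.Ico c (c + m)).ncard = m := by
    rw [hI, Set.ncard_coe_finset, Nat.card_Ico]; omega
  have hLfin : L.Finite := by
    apply Set.Finite.subset (Set.finite_Iio c)
    rw [hL]; intro x hx; exact hx.2
  -- arithmetic about q
  have hdm := Nat.div_add_mod (c + m - 1) m
  have hmod : (c + m - 1) % m < m := Nat.mod_lt _ (by omega)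
  have hqm1 : c ≤ q * m := by
    rw [hq, Nat.mul_comm]; omega
  have hqm2 : q * m < c + m := by
    have h2 := Nat.div_mul_le_self (c + m - 1) m
    rw [hq]; omega
  -- every primitive element is < c + m
  have hPsub : P ⊆ Set.Iio (c + m) := by
    intro x hx
    rw [hP] at hx
    obtain ⟨hxS, hx0, hxnd⟩ := hx
    by_contra hge
    simp only [Set.mem_Iio, not_lt] at hge
    exact hxnd ⟨m, hmS, x - m, hc.1 _ (by omega), hm0, by omega, by omega⟩
  have hPfin : P.Finite := Set.Finite.subset (Set.finite_Iio _) hPsub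
  have hDqfin : Dq.Finite := by
    apply Set.Finite.subset hIfin
    rw [hDq]; intro x hx; exact ⟨hx.2.1, hx.2.2⟩
  -- the interval [c, c+m) splits into primitives and Dq
  have hsplit : Set.Ico c (c + m) = (P ∩ Set.Ico c (c + m)) ∪ Dq := by
    ext x
    simp only [Set.mem_union, Set.mem_inter_iff, Set.mem_Ico, hP, hD, hDq,
      Set.mem_setOf_eq]
    constructor
    · rintro ⟨h1, h2⟩
      have hxS : x ∈ S := hc.1 x h1
      by_cases hd : ∃ a ∈ S, ∃ b ∈ S, a ≠ 0 ∧ b ≠ 0 ∧ a + b = x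
      · right; exact ⟨⟨hxS, hd⟩, h1, h2⟩
      · left; exact ⟨⟨hxS, by omega, hd⟩, h1, h2⟩
    · rintro (⟨_, h⟩ | ⟨_, h⟩) <;> exact h
  have hdisj1 : Disjoint (P ∩ Set.Ico c (c + m)) Dq := by
    rw [Set.disjoint_left]
    rintro x ⟨hxP, _⟩ hxD
    rw [hP] at hxP; rw [hDq, hD] at hxD
    exact hxP.2.2 hxD.1.2
  have hPIfin : (P ∩ Set.Ico c (c + m)).Finite := hPfin.subset Set.inter_subset_left
  have hcard1 : (P ∩ Set.Ico c (c + m)).ncard + Dq.ncard = m := by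
    have h2 := congrArg Set.ncard hsplit
    rw [Set.ncard_union_eq hdisj1 hPIfin hDqfin] at h2
    rw [← h2, hIcard]
  -- P splits into P ∩ L and P ∩ [c, c+m)
  have hPsplit : P = (P ∩ L) ∪ (P ∩ Set.Ico c (c + m)) := by
    ext x
    simp only [Set.mem_union, Set.mem_inter_iff, Set.mem_Ico, hL, Set.mem_setOf_eq]
    constructor
    · intro hx
      have hxlt : x < c + m := hPsub hx
      have hxS : x ∈ S := by rw [hP] at hx; exact hx.1
      rcases lt_or_ge x c with h | h
      · left; exact ⟨hx, hxS, h⟩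
      · right; exact ⟨hx, h, hxlt⟩
    · rintro (⟨h, _⟩ | ⟨h, _⟩) <;> exact h
  have hdisj2 : Disjoint (P ∩ L) (P ∩ Set.Ico c (c + m)) := by
    rw [Set.disjoint_left]
    rintro x ⟨_, hxL⟩ ⟨_, hxI⟩
    rw [hL] at hxL
    exact absurd hxI.1 (not_le.mpr hxL.2)
  have hcard2 : P.ncard = (P ∩ L).ncard + (P ∩ Set.Ico c (c + m)).ncard := by
    conv_lhs => rw [hPsplit]
    exact Set.ncard_union_eq hdisj2 (hPfin.subset Set.inter_subset_left)
      (hPfin.subset Set.inter_subset_left)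
  -- multiples of m are in S
  have hmul : ∀ k : ℕ, k * m ∈ S := by
    intro k
    induction k with
    | zero => simpa using h0
    | succ k ih => rw [Nat.succ_mul]; exact hadd _ ih _ hmS
  -- L has at least q elements
  have hLq : q ≤ L.ncard := by
    have hsub : ↑((Finset.range q).image (· * m)) ⊆ L := by
      intro x hx
      simp only [Finset.coe_image, Set.mem_image, Finset.coe_range, Set.mem_Iio] at hx
      obtain ⟨k, hk, rfl⟩ := hx
      rw [hL]
      refine ⟨hmul k, ?_⟩
      have h1 : k * m + m ≤ q * m := by
        calc k * m + m = (k + 1) * m := by ring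
          _ ≤ q * m := Nat.mul_le_mul_right m (by omega)
      omega
    calc q = ((Finset.range q).image (· * m)).card := by
            rw [Finset.card_image_of_injective _ (mul_left_injective₀ hm0), Finset.card_range]
      _ = (↑((Finset.range q).image (· * m)) : Set ℕ).ncard := (Set.ncard_coe_finset _).symm
      _ ≤ L.ncard := Set.ncard_le_ncard hsub hLfin
  -- final arithmetic
  have hDqle : Dq.ncard ≤ m := by omega
  have hρ' : c + ρ = q * m := by omega
  have key : ((P ∩ Set.Ico c (c + m)).ncard : ℤ) * L.ncard ≥
      ((P ∩ Set.Ico c (c + m)).ncard : ℤ) * q := by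
    apply mul_le_mul_of_nonneg_left _ (by positivity)
    exact_mod_cast hLq
  have e1 : (P.ncard : ℤ) = (P ∩ L).ncard + (P ∩ Set.Ico c (c + m)).ncard := by
    exact_mod_cast hcard2
  have e2 : ((P ∩ Set.Ico c (c + m)).ncard : ℤ) + Dq.ncard = m := by exact_mod_cast hcard1
  have e3 : (c : ℤ) + ρ = q * m := by exact_mod_cast hρ'
  nlinarith [key, e1, e2, e3]
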